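/- Let G be a connected simple graph with diameter D(G) and let M ∈ M(G). If there exists a real univariate polynomial p such that every entry of p(M) is nonzero, then the dimension of the algebra A_M = {p(M) : p ∈ ℝ[x]} generated by M is at least D(G) + 1; equivalently, the minimal polynomial of M over ℝ has degree at least D(G) + 1. -/

import Mathlib

open Matrix

/-- A real `N × N` matrix complies with the graph `G` when its off-diagonal
entries vanish outside the edges of `G`. -/
def SimpleGraph.Complies {N : ℕ} (G : SimpleGraph (Fin N))
    (A : Matrix (Fin N) (Fin N) ℝ) : Prop :=
  ∀ i j : Fin N, i ≠ j → ¬ G.Adj i j → A i j = 0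

lemma pow_entry_eq_zero {N : ℕ} (G : SimpleGraph (Fin N)) (hG : G.Connected)
    (M : Matrix (Fin N) (Fin N) ℝ) (hM : G.Complies M) :
    ∀ (k : ℕ) (i j : Fin N), k < G.dist i j → (M ^ k) i j = 0 := by
  intro k
  induction k with
  | zero =>
    intro i j h
    have hij : i ≠ j := by
      intro e; subst e; simp [SimpleGraph.dist_self] at h
    simp [Matrix.one_apply_ne hij]
  | succ k ih =>
    intro i j h
    rw [pow_succ, Matrix.mul_apply]
    apply Finset.sum_eq_zero
    intro l _
    by_cases hl : k < G.dist i l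
    · rw [ih i l hl, zero_mul]
    · push_neg at hl
      have htri := hG.dist_triangle (u := i) (v := l) (w := j)
      have hlj : 1 < G.dist l j := by omega
      have hne : l ≠ j := by
        intro e; subst e; simp [SimpleGraph.dist_self] at hlj
      have hadj : ¬ G.Adj l j := by
        intro hA
        rw [← SimpleGraph.dist_eq_one_iff_adj] at hA
        omega
      rw [hM l j hne hadj, mul_zero]

/-- If `M` complies with a connected graph `G` and some real polynomial of `M`
has no zero entry, then the algebra generated by `M` (the span of the powers of
`M`) has dimension at least `D(G) + 1`; equivalently, the minimal polynomial of
`M` has degree at least `D(G) + 1`. -/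
theorem dim_algebra_ge_diam_add_one {N : ℕ} (G : SimpleGraph (Fin N))
    (hG : G.Connected) (M : Matrix (Fin N) (Fin N) ℝ) (hM : G.Complies M)
    (p : Polynomial ℝ) (hp : ∀ i j : Fin N, (Polynomial.aeval M p) i j ≠ 0) :
    G.diam + 1 ≤ Module.finrank ℝ
        (Submodule.span ℝ (Set.range fun n : ℕ => M ^ n)) ∧
    G.diam + 1 ≤ (minpoly ℝ M).natDegree := by
  have hNE : Nonempty (Fin N) := hG.nonempty
  obtain ⟨u, v, huv⟩ := SimpleGraph.exists_dist_eq_diam (G := G)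
  have hint : IsIntegral ℝ M := Algebra.IsIntegral.isIntegral M
  have hmonic := minpoly.monic hint
  -- any polynomial of degree ≤ diam has (u,v) entry... rather: aeval of q with natDegree < dist u v is zero at u v? no:
  have key : ∀ q : Polynomial ℝ, q ≠ 0 → q.natDegree < G.dist u v →
      (Polynomial.aeval M q) u v = 0 := by
    intro q hq hdeg
    rw [Polynomial.aeval_eq_sum_range]
    simp only [Matrix.sum_apply, Matrix.smul_apply]
    apply Finset.sum_eq_zero
    intro k hk
    simp only [Finset.mem_range] at hk
    rw [pow_entry_eq_zero G hG M hM k u v (by omega), smul_zero]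
  -- minpoly degree bound
  have hd : G.diam + 1 ≤ (minpoly ℝ M).natDegree := by
    by_contra hcon
    push_neg at hcon
    set m := minpoly ℝ M with hm
    have hrem : Polynomial.aeval M (p %ₘ m) = Polynomial.aeval M p := by
      conv_rhs => rw [← Polynomial.modByMonic_add_div p m]
      rw [map_add, _root_.map_mul, hm, minpoly.aeval, zero_mul, add_zero]
    have hpne : p %ₘ m ≠ 0 := by
      intro e
      apply hp u v
      rw [← hrem, e]
      simp
    have hdeg : (p %ₘ m).natDegree < m.natDegree :=
      Polynomial.natDegree_lt_natDegree hpne (Polynomial.degree_modByMonic_lt p hmonic)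
    have := key (p %ₘ m) hpne (by omega)
    rw [hrem] at this
    exact hp u v this
  refine ⟨?_, hd⟩
  -- linear independence of M^0, ..., M^diam
  have hli : LinearIndependent ℝ (fun k : Fin (G.diam + 1) => M ^ (k : ℕ)) := by
    rw [Fintype.linearIndependent_iff]
    intro c hc
    by_contra hcon
    push_neg at hcon
    obtain ⟨k0, hk0⟩ := hcon
    set q : Polynomial ℝ := ∑ k : Fin (G.diam + 1), Polynomial.C (c k) * Polynomial.X ^ (k : ℕ) with hq
    have hqne : q ≠ 0 := by
      intro e
      apply hk0
      have := congrArg (fun r => r.coeff (k0 : ℕ)) e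
      simp only [hq, Polynomial.finset_sum_coeff, Polynomial.coeff_C_mul,
        Polynomial.coeff_X_pow, Polynomial.coeff_zero] at this
      rw [Finset.sum_eq_single k0] at this
      · simpa using this
      · intro b _ hb
        have hne : (k0 : ℕ) ≠ (b : ℕ) := fun h => hb (Fin.ext h.symm)
        simp only [if_neg hne, mul_zero]
      · simp
    have hqdeg : q.natDegree ≤ G.diam := by
      apply Polynomial.natDegree_sum_le_of_forall_le
      intro k _
      apply le_trans (Polynomial.natDegree_C_mul_le _ _)
      simp [Polynomial.natDegree_X_pow]
      omega
    have haev : Polynomial.aeval M q = 0 := by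
      simp only [hq, map_sum, _root_.map_mul, map_pow, Polynomial.aeval_C, Polynomial.aeval_X]
      simpa [Algebra.smul_def] using hc
    have hle : (minpoly ℝ M).natDegree ≤ q.natDegree :=
      Polynomial.natDegree_le_natDegree (minpoly.degree_le_of_ne_zero ℝ M hqne haev)
    omega
  -- all powers are in the span
  have hmem : ∀ k : Fin (G.diam + 1),
      M ^ (k : ℕ) ∈ Submodule.span ℝ (Set.range fun n : ℕ => M ^ n) :=
    fun k => Submodule.subset_span ⟨k, rfl⟩
  calc G.diam + 1 = Fintype.card (Fin (G.diam + 1)) := by simp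
    _ ≤ Module.finrank ℝ (Submodule.span ℝ (Set.range fun n : ℕ => M ^ n)) := by
        apply LinearIndependent.fintype_card_le_finrank (b := fun k : Fin (G.diam + 1) =>
          (⟨M ^ (k : ℕ), hmem k⟩ : Submodule.span ℝ (Set.range fun n : ℕ => M ^ n)))
        apply LinearIndependent.of_comp (Submodule.span ℝ (Set.range fun n : ℕ => M ^ n)).subtype
        exact hli
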